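/- Let s > 0 with 2s > d. There exists a constant C > 0 such that every Schwartz function f : ℝ^d → ℂ satisfies ‖f‖_{C^0} ≤ C ‖f‖_{H^s}, where ‖f‖_{H^s}^2 = ∫_{ℝ^d} (1 + |ξ|^{2s}) |𝓕f(ξ)|^2 dξ and ‖f‖_{C^0} is the supremum norm. -/

import Mathlib

open MeasureTheory Real
open scoped FourierTransform

/-- Fourier transform with the normalization `𝓕f(ξ) = (2π)^{-d/2} ∫ e^{-i x·ξ} f(x) dx`. -/
noncomputable def fourierTr {d : ℕ} (f : EuclideanSpace ℝ (Fin d) → ℂ)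
    (ξ : EuclideanSpace ℝ (Fin d)) : ℂ :=
  ((((2 * π : ℝ) ^ (-(d : ℝ) / 2) : ℝ)) : ℂ) *
    ∫ x : EuclideanSpace ℝ (Fin d), Complex.exp (-Complex.I * ((inner ℝ x ξ : ℝ) : ℂ)) * f x

lemma fourierTr_eq {d : ℕ} (f : EuclideanSpace ℝ (Fin d) → ℂ) (ξ : EuclideanSpace ℝ (Fin d)) :
    fourierTr f ξ = (((2 * π : ℝ) ^ (-(d : ℝ) / 2) : ℝ) : ℂ) * 𝓕 f ((2 * π)⁻¹ • ξ) := by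
  rw [fourierTr, Real.fourier_eq']
  congr 1
  refine integral_congr_ae (Filter.Eventually.of_forall fun x => ?_)
  show Complex.exp (-Complex.I * ((inner ℝ x ξ : ℝ) : ℂ)) * f x
      = Complex.exp (((-2 * π * (inner ℝ x ((2*π)⁻¹ • ξ) : ℝ) : ℝ) : ℂ) * Complex.I) • f x
  rw [smul_eq_mul]
  congr 2
  rw [real_inner_smul_right]
  have hπ : (2*π : ℝ) ≠ 0 := by positivity
  have h2 : (-2*π*((2*π)⁻¹ * (inner ℝ x ξ : ℝ)) : ℝ) = -(inner ℝ x ξ : ℝ) := by field_simp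
  rw [h2]
  push_cast
  ring

lemma norm_le_integral_fourier {d : ℕ} (f : SchwartzMap (EuclideanSpace ℝ (Fin d)) ℂ)
    (x : EuclideanSpace ℝ (Fin d)) :
    ‖f x‖ ≤ ∫ ξ : EuclideanSpace ℝ (Fin d), ‖𝓕 (⇑f) ξ‖ := by
  have hFi : Integrable (𝓕 (⇑f)) := by
    rw [← SchwartzMap.fourier_coe]
    exact SchwartzMap.integrable _
  have hinv := f.continuous.fourierInv_fourier_eq f.integrable hFi
  calc ‖f x‖ = ‖𝓕⁻ (𝓕 (⇑f)) x‖ := by rw [hinv]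
    _ ≤ ∫ ξ, ‖𝓕 (⇑f) ξ‖ := by
        rw [Real.fourierInv_eq]
        refine (norm_integral_le_integral_norm _).trans_eq ?_
        refine integral_congr_ae (Filter.Eventually.of_forall fun ξ => ?_)
        simp

theorem stmt_3 (d : ℕ) (s : ℝ) (hs : 0 < s) (hds : (d : ℝ) < 2 * s) :
    ∃ C > (0 : ℝ), ∀ f : SchwartzMap (EuclideanSpace ℝ (Fin d)) ℂ,
      ∀ x : EuclideanSpace ℝ (Fin d),
        ‖f x‖ ≤ C * Real.sqrt (∫ ξ : EuclideanSpace ℝ (Fin d),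
          (1 + ‖ξ‖ ^ (2 * s)) * ‖fourierTr (⇑f) ξ‖ ^ 2) := by
  have hπ : (0:ℝ) < 2 * π := by positivity
  set c : ℝ := (2 * π) ^ (-(d : ℝ) / 2) with hc
  have hc0 : 0 < c := rpow_pos_of_pos hπ _
  set w : EuclideanSpace ℝ (Fin d) → ℝ := fun ξ => 1 + ‖ξ‖ ^ (2 * s) with hw
  have hw1 : ∀ ξ, 1 ≤ w ξ := fun ξ => le_add_of_nonneg_right (rpow_nonneg (norm_nonneg _) _)
  have hw0 : ∀ ξ, 0 < w ξ := fun ξ => lt_of_lt_of_le one_pos (hw1 ξ)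
  have hwc : Continuous w :=
    continuous_const.add (continuous_norm.rpow_const fun ξ => Or.inr (by positivity))
  have hs2 : (Module.finrank ℝ (EuclideanSpace ℝ (Fin d)) : ℝ) < 2 * s := by
    rw [finrank_euclideanSpace_fin]; exact hds
  -- integrability of w⁻¹
  have I1 : Integrable (fun ξ : EuclideanSpace ℝ (Fin d) => (w ξ)⁻¹) := by
    refine ((integrable_one_add_norm hs2).const_mul ((2:ℝ) ^ (2*s))).mono'
      ((hwc.inv₀ (fun ξ => (hw0 ξ).ne')).aestronglyMeasurable)
      (Filter.Eventually.of_forall fun ξ => ?_)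
    rw [Real.norm_of_nonneg (inv_nonneg.2 (hw0 ξ).le), Real.rpow_neg (by positivity)]
    have h1 : (0:ℝ) < (1+‖ξ‖)^(2*s) := by positivity
    have key : (1+‖ξ‖)^(2*s) ≤ 2^(2*s) * w ξ := by
      rcases le_total ‖ξ‖ 1 with h|h
      · have : (1+‖ξ‖)^(2*s) ≤ (2:ℝ)^(2*s) :=
          rpow_le_rpow (by positivity) (by linarith) (by positivity)
        exact this.trans (le_mul_of_one_le_right (by positivity) (hw1 ξ))
      · have h1' : (1+‖ξ‖ : ℝ) ≤ 2 * ‖ξ‖ := by linarith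
        calc (1+‖ξ‖)^(2*s) ≤ (2*‖ξ‖)^(2*s) :=
              rpow_le_rpow (by positivity) h1' (by positivity)
          _ = 2^(2*s) * ‖ξ‖^(2*s) := mul_rpow (by norm_num) (norm_nonneg _)
          _ ≤ 2^(2*s) * w ξ := by
              refine mul_le_mul_of_nonneg_left ?_ (by positivity)
              simp only [hw]; linarith [rpow_nonneg (norm_nonneg ξ) (2*s)]
    have h2 : (w ξ)⁻¹ * (1+‖ξ‖)^(2*s) ≤ 2^(2*s) := by
      rw [inv_mul_le_iff₀ (hw0 ξ)]
      calc (1+‖ξ‖)^(2*s) ≤ 2^(2*s) * w ξ := key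
        _ = w ξ * 2^(2*s) := by ring
    calc (w ξ)⁻¹ = ((w ξ)⁻¹ * (1+‖ξ‖)^(2*s)) * ((1+‖ξ‖)^(2*s))⁻¹ := by field_simp
      _ ≤ 2^(2*s) * ((1+‖ξ‖)^(2*s))⁻¹ := mul_le_mul_of_nonneg_right h2 (by positivity)
  set A : ℝ := ∫ ξ : EuclideanSpace ℝ (Fin d), (w ξ)⁻¹ with hA
  refine ⟨c * (Real.sqrt A + 1), by positivity, fun f x => ?_⟩
  -- notation
  set F : EuclideanSpace ℝ (Fin d) → ℂ := 𝓕 (⇑f) with hF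
  have hFc : Continuous F := by
    rw [hF, ← SchwartzMap.fourier_coe]
    exact (𝓕 f).continuous
  have hFschwartz : F = ⇑(FourierTransform.fourierCLE ℝ _ f) :=
    (SchwartzMap.fourier_coe f).symm
  set g : EuclideanSpace ℝ (Fin d) → ℂ := fourierTr (⇑f) with hg
  have hkey : ∀ ξ, g ξ = (c:ℂ) * F ((2*π)⁻¹ • ξ) := fun ξ => fourierTr_eq _ ξ
  have hgnorm : ∀ ξ, ‖g ξ‖ = c * ‖F ((2*π)⁻¹ • ξ)‖ := by
    intro ξ
    rw [hkey ξ, norm_mul, Complex.norm_real, Real.norm_of_nonneg hc0.le]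
  have hgcont : Continuous g := by
    have : g = fun ξ => (c:ℂ) * F ((2*π)⁻¹ • ξ) := funext hkey
    rw [this]
    exact continuous_const.mul (hFc.comp (continuous_const_smul _))
  -- scaling identity : ∫ ‖F‖ = c * ∫ ‖g‖
  have hscale : ∫ ξ : EuclideanSpace ℝ (Fin d), ‖F ξ‖
      = c * ∫ ξ : EuclideanSpace ℝ (Fin d), ‖g ξ‖ := by
    have e1 : ∫ ξ : EuclideanSpace ℝ (Fin d), ‖g ξ‖
        = c * ∫ ξ : EuclideanSpace ℝ (Fin d), ‖F ((2*π)⁻¹ • ξ)‖ := by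
      rw [← integral_const_mul]
      exact integral_congr_ae (Filter.Eventually.of_forall fun ξ => hgnorm ξ)
    have e2 : ∫ ξ : EuclideanSpace ℝ (Fin d), ‖F ((2*π)⁻¹ • ξ)‖
        = (2*π)^(d:ℕ) * ∫ ξ : EuclideanSpace ℝ (Fin d), ‖F ξ‖ := by
      rw [Measure.integral_comp_smul volume (fun ξ => ‖F ξ‖) ((2*π)⁻¹),
        finrank_euclideanSpace_fin, smul_eq_mul]
      congr 1
      rw [inv_pow, inv_inv, abs_of_pos (pow_pos hπ d)]
    have hc2 : c * (c * (2*π)^(d:ℕ)) = 1 := by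
      simp only [hc]
      rw [← Real.rpow_natCast (2*π) d, ← Real.rpow_add hπ, ← Real.rpow_add hπ,
        show (-(d:ℝ)/2 + (-(d:ℝ)/2 + (d:ℝ))) = 0 by ring, Real.rpow_zero]
    rw [e1, e2]
    have : c * (c * ((2*π)^(d:ℕ) * ∫ ξ : EuclideanSpace ℝ (Fin d), ‖F ξ‖))
        = (c * (c * (2*π)^(d:ℕ))) * ∫ ξ : EuclideanSpace ℝ (Fin d), ‖F ξ‖ := by ring
    rw [this, hc2, one_mul]
  -- Schwartz bound for g
  set h : SchwartzMap (EuclideanSpace ℝ (Fin d)) ℂ := FourierTransform.fourierCLE ℝ _ f with hh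
  have hFh : F = ⇑h := hFschwartz
  set n : ℕ := ⌈2*s⌉₊ with hn
  have hns : 2*s ≤ (n:ℝ) := Nat.le_ceil _
  have hB : ∀ ξ, ‖h ξ‖ ≤ SchwartzMap.seminorm ℝ 0 0 h := fun ξ => SchwartzMap.norm_le_seminorm ℝ h ξ
  set B : ℝ := SchwartzMap.seminorm ℝ 0 0 h with hBdef
  have hB0 : 0 ≤ B := (norm_nonneg _).trans (hB 0)
  have hgB : ∀ ξ, ‖g ξ‖ ≤ c * B := by
    intro ξ
    rw [hgnorm ξ, hFh]
    exact mul_le_mul_of_nonneg_left (hB _) hc0.le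
  have h2π : ((2*π:ℝ))⁻¹ ≠ 0 := by positivity
  -- integrability of ‖g‖ and ‖ξ‖^n * ‖g ξ‖
  have ig : Integrable g := by
    have : Integrable (fun ξ : EuclideanSpace ℝ (Fin d) => F ((2*π)⁻¹ • ξ)) := by
      rw [hFh]
      exact (integrable_comp_smul_iff volume (⇑h) h2π).2 h.integrable
    have e : g = fun ξ => (c:ℂ) * F ((2*π)⁻¹ • ξ) := funext hkey
    rw [e]
    exact this.const_mul _
  have ipow : Integrable (fun ξ : EuclideanSpace ℝ (Fin d) => ‖ξ‖^n * ‖g ξ‖) := by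
    have base : Integrable (fun ξ : EuclideanSpace ℝ (Fin d) =>
        (c * (2*π)^(n:ℕ)) * (‖ξ‖^n * ‖h ξ‖)) := (h.integrable_pow_mul volume n).const_mul _
    have comp := (integrable_comp_smul_iff volume
      (fun ξ : EuclideanSpace ℝ (Fin d) => (c * (2*π)^(n:ℕ)) * (‖ξ‖^n * ‖h ξ‖)) h2π).2 base
    refine comp.congr (Filter.Eventually.of_forall fun ξ => ?_)
    show (c * (2*π)^(n:ℕ)) * (‖(2*π)⁻¹ • ξ‖^n * ‖h ((2*π)⁻¹ • ξ)‖) = ‖ξ‖^n * ‖g ξ‖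
    rw [hgnorm ξ, hFh, norm_smul, Real.norm_eq_abs, abs_of_pos (by positivity : (0:ℝ) < (2*π)⁻¹),
      mul_pow]
    have hone : ((2*π:ℝ))⁻¹ ^ n * (2*π)^(n:ℕ) = 1 := by
      rw [inv_pow, inv_mul_cancel₀ (pow_ne_zero _ hπ.ne')]
    linear_combination (c * ‖ξ‖ ^ n * ‖h ((2*π)⁻¹ • ξ)‖) * hone
  -- integrability of the weighted square
  have I2 : Integrable (fun ξ : EuclideanSpace ℝ (Fin d) => w ξ * ‖g ξ‖^2) := by
    have major : Integrable (fun ξ : EuclideanSpace ℝ (Fin d) =>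
        (c*B) * (2 * ‖g ξ‖ + ‖ξ‖^n * ‖g ξ‖)) := ((ig.norm.const_mul 2).add ipow).const_mul _
    refine major.mono' ((hwc.mul ((hgcont.norm).pow 2)).aestronglyMeasurable)
      (Filter.Eventually.of_forall fun ξ => ?_)
    have hwn : w ξ ≤ 2 + ‖ξ‖^n := by
      have : ‖ξ‖^(2*s) ≤ 1 + ‖ξ‖^n := by
        rcases le_total ‖ξ‖ 1 with hle|hle
        · have : ‖ξ‖^(2*s) ≤ 1 := rpow_le_one (norm_nonneg _) hle (by positivity)
          have hn0 : (0:ℝ) ≤ ‖ξ‖^n := by positivity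
          linarith
        · have h1 : ‖ξ‖^(2*s) ≤ ‖ξ‖^(n:ℝ) := rpow_le_rpow_of_exponent_le hle hns
          rw [Real.rpow_natCast] at h1
          linarith
      simp only [hw]; linarith
    rw [Real.norm_of_nonneg (by positivity)]
    have hgn : 0 ≤ ‖g ξ‖ := norm_nonneg _
    calc w ξ * ‖g ξ‖^2 ≤ (2 + ‖ξ‖^n) * ‖g ξ‖^2 :=
          mul_le_mul_of_nonneg_right hwn (sq_nonneg _)
      _ = ((2 + ‖ξ‖^n) * ‖g ξ‖) * ‖g ξ‖ := by ring
      _ ≤ ((2 + ‖ξ‖^n) * ‖g ξ‖) * (c*B) := by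
          refine mul_le_mul_of_nonneg_left (hgB ξ) ?_
          have : (0:ℝ) ≤ ‖ξ‖^n := by positivity
          nlinarith
      _ = (c*B) * (2 * ‖g ξ‖ + ‖ξ‖^n * ‖g ξ‖) := by ring
  -- Cauchy-Schwarz
  set u : EuclideanSpace ℝ (Fin d) → ℝ := fun ξ => (w ξ) ^ (-(1/2) : ℝ) with hu
  set v : EuclideanSpace ℝ (Fin d) → ℝ := fun ξ => (w ξ) ^ ((1/2) : ℝ) * ‖g ξ‖ with hv
  have huv : ∀ ξ, u ξ * v ξ = ‖g ξ‖ := by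
    intro ξ
    show w ξ ^ (-(1/2):ℝ) * (w ξ ^ ((1/2):ℝ) * ‖g ξ‖) = ‖g ξ‖
    rw [← mul_assoc, ← Real.rpow_add (hw0 ξ)]
    norm_num
  have hu2' : ∀ ξ, u ξ ^ 2 = (w ξ)⁻¹ := by
    intro ξ
    show (w ξ ^ (-(1/2):ℝ)) ^ 2 = (w ξ)⁻¹
    rw [← Real.rpow_natCast (w ξ ^ (-(1/2):ℝ)) 2, ← Real.rpow_mul (hw0 ξ).le,
      show (-(1/2:ℝ) * ((2:ℕ):ℝ)) = -1 by norm_num, Real.rpow_neg_one]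
  have hv2' : ∀ ξ, v ξ ^ 2 = w ξ * ‖g ξ‖ ^ 2 := by
    intro ξ
    show (w ξ ^ ((1/2):ℝ) * ‖g ξ‖) ^ 2 = w ξ * ‖g ξ‖ ^ 2
    rw [mul_pow, ← Real.rpow_natCast (w ξ ^ ((1/2):ℝ)) 2, ← Real.rpow_mul (hw0 ξ).le,
      show ((1/2:ℝ) * ((2:ℕ):ℝ)) = 1 by norm_num, Real.rpow_one]
  have hucont : Continuous u := hwc.rpow_const fun ξ => Or.inl (hw0 ξ).ne'
  have hvcont : Continuous v := (hwc.rpow_const fun ξ => Or.inl (hw0 ξ).ne').mul hgcont.norm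
  have hof2 : (ENNReal.ofReal 2) = 2 := by norm_num
  have hmemu : MemLp u (ENNReal.ofReal 2) volume := by
    rw [hof2]
    exact (memLp_two_iff_integrable_sq hucont.aestronglyMeasurable).2
      (I1.congr (Filter.Eventually.of_forall fun ξ => (hu2' ξ).symm))
  have hmemv : MemLp v (ENNReal.ofReal 2) volume := by
    rw [hof2]
    exact (memLp_two_iff_integrable_sq hvcont.aestronglyMeasurable).2
      (I2.congr (Filter.Eventually.of_forall fun ξ => (hv2' ξ).symm))
  have htwo : Real.HolderConjugate 2 2 := ⟨by norm_num, by norm_num, by norm_num⟩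
  have hCS := integral_mul_le_Lp_mul_Lq_of_nonneg htwo
    (Filter.Eventually.of_forall fun ξ => Real.rpow_nonneg (hw0 ξ).le _)
    (Filter.Eventually.of_forall fun ξ =>
      mul_nonneg (Real.rpow_nonneg (hw0 ξ).le _) (norm_nonneg _))
    hmemu hmemv
  have l1 : ∫ ξ : EuclideanSpace ℝ (Fin d), u ξ * v ξ
      = ∫ ξ : EuclideanSpace ℝ (Fin d), ‖g ξ‖ :=
    integral_congr_ae (Filter.Eventually.of_forall huv)
  have l2 : ∫ ξ : EuclideanSpace ℝ (Fin d), u ξ ^ (2:ℝ) = A := by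
    rw [hA]
    exact integral_congr_ae (Filter.Eventually.of_forall fun ξ => by
      show u ξ ^ (2:ℝ) = (w ξ)⁻¹
      rw [Real.rpow_two]; exact hu2' ξ)
  have l3 : ∫ ξ : EuclideanSpace ℝ (Fin d), v ξ ^ (2:ℝ)
      = ∫ ξ : EuclideanSpace ℝ (Fin d), (1 + ‖ξ‖ ^ (2*s)) * ‖g ξ‖ ^ 2 := by
    refine integral_congr_ae (Filter.Eventually.of_forall fun ξ => ?_)
    show v ξ ^ (2:ℝ) = (1 + ‖ξ‖ ^ (2*s)) * ‖g ξ‖ ^ 2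
    rw [Real.rpow_two, hv2' ξ]
  have e3 : ∫ ξ : EuclideanSpace ℝ (Fin d), ‖g ξ‖
      ≤ Real.sqrt A * Real.sqrt (∫ ξ : EuclideanSpace ℝ (Fin d),
        (1 + ‖ξ‖ ^ (2*s)) * ‖g ξ‖ ^ 2) := by
    calc ∫ ξ : EuclideanSpace ℝ (Fin d), ‖g ξ‖
        = ∫ ξ : EuclideanSpace ℝ (Fin d), u ξ * v ξ := l1.symm
      _ ≤ (∫ ξ : EuclideanSpace ℝ (Fin d), u ξ ^ (2:ℝ)) ^ ((1:ℝ)/2)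
          * (∫ ξ : EuclideanSpace ℝ (Fin d), v ξ ^ (2:ℝ)) ^ ((1:ℝ)/2) := hCS
      _ = Real.sqrt A * Real.sqrt (∫ ξ : EuclideanSpace ℝ (Fin d),
            (1 + ‖ξ‖ ^ (2*s)) * ‖g ξ‖ ^ 2) := by
          rw [l2, l3, ← Real.sqrt_eq_rpow, ← Real.sqrt_eq_rpow]
  have hTn : (0:ℝ) ≤ Real.sqrt (∫ ξ : EuclideanSpace ℝ (Fin d),
      (1 + ‖ξ‖ ^ (2*s)) * ‖g ξ‖ ^ 2) := Real.sqrt_nonneg _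
  calc ‖f x‖ ≤ ∫ ξ : EuclideanSpace ℝ (Fin d), ‖F ξ‖ := norm_le_integral_fourier f x
    _ = c * ∫ ξ : EuclideanSpace ℝ (Fin d), ‖g ξ‖ := hscale
    _ ≤ c * (Real.sqrt A * Real.sqrt (∫ ξ : EuclideanSpace ℝ (Fin d),
          (1 + ‖ξ‖ ^ (2*s)) * ‖g ξ‖ ^ 2)) := mul_le_mul_of_nonneg_left e3 hc0.le
    _ = (c * Real.sqrt A) * Real.sqrt (∫ ξ : EuclideanSpace ℝ (Fin d),
          (1 + ‖ξ‖ ^ (2*s)) * ‖g ξ‖ ^ 2) := by ring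
    _ ≤ (c * (Real.sqrt A + 1)) * Real.sqrt (∫ ξ : EuclideanSpace ℝ (Fin d),
          (1 + ‖ξ‖ ^ (2*s)) * ‖g ξ‖ ^ 2) :=
        mul_le_mul_of_nonneg_right
          (mul_le_mul_of_nonneg_left (by linarith [Real.sqrt_nonneg A]) hc0.le) hTn
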